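/- Transcendence from multiple specialized experts: in the partition setting with p_test assigning positive mass to at least two distinct parts X_i ≠ X_j, there exists τ ∈ (0,1) such that for all 0 < τ' ≤ τ, the tempered mixture f̂_{τ'}(·|x) = softmax(f̂(·|x); τ'), where f̂ = (1/k)∑_i f_i, satisfies R(f̂_{τ'}) > max_i R(f_i). -/

import Mathlib

open Finset

/-- Softmax with temperature `τ`. -/
noncomputable def softmax {Y : Type} [Fintype Y] (q : Y → ℝ) (τ : ℝ) (y : Y) : ℝ :=
  Real.exp (q y / τ) / ∑ y', Real.exp (q y' / τ)

open scoped Classical in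
/-- The set of maximizers of `q`. -/
noncomputable def maxSet {Y : Type} [Fintype Y] (q : Y → ℝ) : Finset Y :=
  Finset.univ.filter (fun y => ∀ y', q y' ≤ q y)

/-- Expected reward of a conditional distribution `f` under test distribution `ptest`. -/
noncomputable def reward {X Y : Type} [Fintype X] [Fintype Y]
    (ptest : X → ℝ) (r : X → Y → ℝ) (f : X → Y → ℝ) : ℝ :=
  ∑ x, ptest x * ∑ y, f x y * r x y

open scoped Classical in
lemma mem_maxSet {Y : Type} [Fintype Y] {q : Y → ℝ} {y : Y} :
    y ∈ maxSet q ↔ ∀ y', q y' ≤ q y := by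
  simp [maxSet]

lemma maxSet_nonempty {Y : Type} [Fintype Y] [Nonempty Y] (q : Y → ℝ) :
    (maxSet q).Nonempty := by
  classical
  obtain ⟨y, -, hy⟩ := Finset.exists_max_image (univ : Finset Y) q univ_nonempty
  exact ⟨y, mem_maxSet.2 fun y' => hy y' (mem_univ _)⟩

lemma sum_softmax {Y : Type} [Fintype Y] [Nonempty Y] (q : Y → ℝ) (τ : ℝ) :
    ∑ y, softmax q τ y = 1 := by
  have hZ : (0:ℝ) < ∑ y', Real.exp (q y' / τ) :=
    Finset.sum_pos (fun y _ => Real.exp_pos _) univ_nonempty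
  simp only [softmax, ← Finset.sum_div]
  exact div_self (ne_of_gt hZ)

lemma softmax_nonneg {Y : Type} [Fintype Y] [Nonempty Y] (q : Y → ℝ) (τ : ℝ) (y : Y) :
    0 ≤ softmax q τ y := by
  have hZ : (0:ℝ) < ∑ y', Real.exp (q y' / τ) :=
    Finset.sum_pos (fun y _ => Real.exp_pos _) univ_nonempty
  exact div_nonneg (Real.exp_pos _).le hZ.le

lemma softmax_le {Y : Type} [Fintype Y] (q : Y → ℝ) (τ : ℝ) (y z : Y) :
    softmax q τ y ≤ Real.exp (q y / τ - q z / τ) := by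
  classical
  have hZ : Real.exp (q z / τ) ≤ ∑ y', Real.exp (q y' / τ) :=
    Finset.single_le_sum (f := fun y' => Real.exp (q y' / τ))
      (fun y' _ => (Real.exp_pos _).le) (mem_univ z)
  calc softmax q τ y ≤ Real.exp (q y / τ) / Real.exp (q z / τ) :=
        div_le_div_of_nonneg_left (Real.exp_pos _).le (Real.exp_pos _) hZ
    _ = Real.exp (q y / τ - q z / τ) := (Real.exp_sub _ _).symm

open scoped Classical in
/-- Transcendence from multiple specialized experts: in the partition setting with positive
test mass on at least two parts, there is a temperature `τ ∈ (0,1)` such that for every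
`τ' ∈ (0,τ]` the tempered uniform mixture strictly beats every expert. -/
theorem transcendence_multiple_experts {X Y : Type}
    [Fintype X] [Nonempty X] [Fintype Y] [Nonempty Y]
    {k : ℕ} (hk : 2 ≤ k)
    (r : X → Y → ℝ) (hr : ∀ x, ∃ y y', r x y ≠ r x y')
    (Xs : Fin k → Set X)
    (hcover : (⋃ i, Xs i) = Set.univ)
    (hdisj : ∀ i j, i ≠ j → Disjoint (Xs i) (Xs j))
    (hne : ∀ i, (Xs i).Nonempty)
    (f : Fin k → X → Y → ℝ)
    (hf : ∀ i x y, f i x y =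
      (if x ∈ Xs i ∧ y ∈ maxSet (fun y' => r x y') then
        (1 : ℝ) / (maxSet (fun y' => r x y')).card else 0)
      + (if x ∉ Xs i then (1 : ℝ) / (Fintype.card Y : ℝ) else 0))
    (fhat : X → Y → ℝ) (hfhat : ∀ x y, fhat x y = (1 / (k : ℝ)) * ∑ i, f i x y)
    (ptest : X → ℝ) (hp0 : ∀ x, 0 ≤ ptest x) (hp1 : ∑ x, ptest x = 1)
    (hmass : ∃ i j, i ≠ j ∧ (0 < ∑ x, if x ∈ Xs i then ptest x else 0)
      ∧ (0 < ∑ x, if x ∈ Xs j then ptest x else 0)) :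
    ∃ τ : ℝ, τ ∈ Set.Ioo (0 : ℝ) 1 ∧ ∀ τ' : ℝ, 0 < τ' → τ' ≤ τ →
      reward ptest r (fun x => softmax (fhat x) τ')
        > Finset.univ.sup' ⟨⟨0, by omega⟩, Finset.mem_univ _⟩
            (fun i => reward ptest r (f i)) := by
  classical
  have hYpos : (0:ℝ) < (Fintype.card Y : ℝ) := by exact_mod_cast Fintype.card_pos
  have hkpos : (0:ℝ) < (k:ℝ) := by exact_mod_cast (by omega : 0 < k)
  have hYne : (univ : Finset Y).Nonempty := univ_nonempty
  have hXne : (univ : Finset X).Nonempty := univ_nonempty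
  have hMne : ∀ x : X, (maxSet (fun y' => r x y')).Nonempty := fun x => maxSet_nonempty _
  have hMcard : ∀ x : X, (0:ℝ) < ((maxSet (fun y' => r x y')).card : ℝ) := fun x => by
    exact_mod_cast (hMne x).card_pos
  have hMcardle : ∀ x : X, ((maxSet (fun y' => r x y')).card : ℝ) ≤ (Fintype.card Y : ℝ) :=
    fun x => by exact_mod_cast Finset.card_le_univ _
  set maxv : X → ℝ := fun x => univ.sup' hYne (r x) with hmaxvdef
  set minv : X → ℝ := fun x => univ.inf' hYne (r x) with hminvdef
  have hrle : ∀ x y, r x y ≤ maxv x := fun x y => le_sup' _ (mem_univ y)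
  have hrge : ∀ x y, minv x ≤ r x y := fun x y => inf'_le _ (mem_univ y)
  have hMval : ∀ x y, y ∈ maxSet (fun y' => r x y') → r x y = maxv x := by
    intro x y hy
    exact le_antisymm (hrle x y) (sup'_le _ _ fun y' _ => mem_maxSet.1 hy y')
  have hminmax : ∀ x, minv x < maxv x := by
    intro x
    obtain ⟨y, y', hyy⟩ := hr x
    rcases lt_or_gt_of_ne hyy with h | h
    · exact lt_of_le_of_lt (hrge x y) (lt_of_lt_of_le h (hrle x y'))
    · exact lt_of_le_of_lt (hrge x y') (lt_of_lt_of_le h (hrle x y))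
  -- the unique part containing x
  have hex : ∀ x : X, ∃ i, x ∈ Xs i := by
    intro x
    have : x ∈ ⋃ i, Xs i := hcover ▸ Set.mem_univ x
    exact Set.mem_iUnion.1 this
  choose i0 hi0 using hex
  have huniq : ∀ x i, x ∈ Xs i → i = i0 x := by
    intro x i hx
    by_contra hne'
    exact Set.disjoint_left.1 (hdisj i (i0 x) hne') hx (hi0 x)
  have hsingle : ∀ (x : X) (c : ℝ), (∑ i : Fin k, if x ∈ Xs i then c else 0) = c := by
    intro x c
    rw [Finset.sum_eq_single (i0 x)]
    · simp [hi0 x]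
    · intro i _ hi
      rw [if_neg fun hx => hi (huniq x i hx)]
    · simp
  -- the formula for fhat
  have hfhat' : ∀ x y, fhat x y = ((k:ℝ)-1)/((k:ℝ)*(Fintype.card Y:ℝ))
      + (if y ∈ maxSet (fun y' => r x y') then
          (1:ℝ)/((k:ℝ)*((maxSet (fun y' => r x y')).card:ℝ)) else 0) := by
    intro x y
    rw [hfhat]
    have hsum : (∑ i, f i x y)
        = (if y ∈ maxSet (fun y' => r x y') then
            (1:ℝ)/((maxSet (fun y' => r x y')).card:ℝ) else 0)
          + ((k:ℝ)-1)/(Fintype.card Y:ℝ) := by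
      rw [Finset.sum_congr rfl fun i _ => hf i x y, Finset.sum_add_distrib]
      congr 1
      · rw [Finset.sum_eq_single (i0 x)]
        · simp [hi0 x]
        · intro i _ hi
          rw [if_neg fun hx => hi (huniq x i hx.1)]
        · simp
      · have hrw : ∀ i : Fin k, (if x ∉ Xs i then (1:ℝ)/(Fintype.card Y:ℝ) else 0)
            = (1:ℝ)/(Fintype.card Y:ℝ) - (if x ∈ Xs i then (1:ℝ)/(Fintype.card Y:ℝ) else 0) := by
          intro i
          by_cases h : x ∈ Xs i <;> simp [h]
        rw [Finset.sum_congr rfl fun i _ => hrw i, Finset.sum_sub_distrib, hsingle,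
          Finset.sum_const, Finset.card_univ, Fintype.card_fin, nsmul_eq_mul]
        ring
    rw [hsum]
    by_cases hy : y ∈ maxSet (fun y' => r x y') <;> simp only [hy, if_true, if_false]
    · field_simp
      ring
    · field_simp
      ring
  -- expert rewards
  have hinner_mem : ∀ (i : Fin k) (x : X), x ∈ Xs i → ∑ y, f i x y * r x y = maxv x := by
    intro i x hx
    have h1 : ∀ y, f i x y = if y ∈ maxSet (fun y' => r x y') then
        (1:ℝ)/((maxSet (fun y' => r x y')).card:ℝ) else 0 := by
      intro y
      rw [hf]
      simp [hx]
    rw [Finset.sum_congr rfl fun y _ => by rw [h1 y]]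
    simp only [ite_mul, zero_mul]
    rw [Finset.sum_ite_mem, Finset.univ_inter,
      Finset.sum_congr rfl (fun y hy => by rw [hMval x y hy])]
    rw [Finset.sum_const, nsmul_eq_mul]
    field_simp
  have hinner_not : ∀ (i : Fin k) (x : X), x ∉ Xs i →
      ∑ y, f i x y * r x y = (∑ y, r x y)/(Fintype.card Y:ℝ) := by
    intro i x hx
    have h1 : ∀ y : Y, f i x y = (1:ℝ)/(Fintype.card Y:ℝ) := by
      intro y
      rw [hf]
      simp [hx]
    rw [Finset.sum_congr rfl fun y _ => by rw [h1 y]]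
    rw [← Finset.mul_sum, one_div, inv_mul_eq_div]
  have havg_lt : ∀ x, (∑ y, r x y)/(Fintype.card Y:ℝ) < maxv x := by
    intro x
    rw [div_lt_iff₀ hYpos]
    obtain ⟨y0, -, hy0⟩ := Finset.exists_mem_eq_inf' hYne (r x)
    have hsum_lt : ∑ y, r x y < ∑ _y : Y, maxv x := by
      apply Finset.sum_lt_sum (fun y _ => hrle x y)
      exact ⟨y0, mem_univ _, by rw [← hy0]; exact hminmax x⟩
    calc ∑ y, r x y < ∑ _y : Y, maxv x := hsum_lt
      _ = maxv x * (Fintype.card Y:ℝ) := by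
          rw [Finset.sum_const, Finset.card_univ, nsmul_eq_mul]; ring
  obtain ⟨i1, j1, hij, hpi1, hpj1⟩ := hmass
  have hx0 : ∀ i : Fin k, ∃ x0, 0 < ptest x0 ∧ x0 ∉ Xs i := by
    intro i
    have hmass' : ∃ j, j ≠ i ∧ (0 < ∑ x, if x ∈ Xs j then ptest x else 0) := by
      by_cases h : i = i1
      · exact ⟨j1, by rw [h]; exact hij.symm, hpj1⟩
      · exact ⟨i1, fun hh => h hh.symm, hpi1⟩
    obtain ⟨j, hji, hpj⟩ := hmass'
    obtain ⟨x0, -, hx0⟩ := Finset.exists_ne_zero_of_sum_ne_zero hpj.ne'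
    by_cases hxj : x0 ∈ Xs j
    · refine ⟨x0, ?_, ?_⟩
      · rcases (hp0 x0).lt_or_eq with h | h
        · exact h
        · exact absurd (by simp [hxj, ← h]) hx0
      · intro hxi
        exact Set.disjoint_left.1 (hdisj j i hji) hxj hxi
    · exact absurd (by simp [hxj]) hx0
  have hRstar : ∀ i, reward ptest r (f i) < ∑ x, ptest x * maxv x := by
    intro i
    obtain ⟨x0, hx0p, hx0n⟩ := hx0 i
    unfold reward
    apply Finset.sum_lt_sum
    · intro x _
      by_cases hx : x ∈ Xs i
      · exact le_of_eq (by rw [hinner_mem i x hx])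
      · rw [hinner_not i x hx]
        exact mul_le_mul_of_nonneg_left (havg_lt x).le (hp0 x)
    · exact ⟨x0, mem_univ _, by
        rw [hinner_not i x0 hx0n]
        exact mul_lt_mul_of_pos_left (havg_lt x0) hx0p⟩
  -- softmax reward bound
  set δ : ℝ := 1/((k:ℝ)*(Fintype.card Y:ℝ)) with hδdef
  have hδpos : 0 < δ := div_pos one_pos (mul_pos hkpos hYpos)
  have hsoft : ∀ τ', 0 < τ' → ∀ x,
      maxv x - ∑ y, softmax (fhat x) τ' y * r x y
        ≤ (Fintype.card Y:ℝ) * ((maxv x - minv x) * Real.exp (-(δ/τ'))) := by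
    intro τ' hτ' x
    obtain ⟨ymax, hymax⟩ := hMne x
    have hsum1 : ∑ y, softmax (fhat x) τ' y = 1 := sum_softmax _ _
    have heq : maxv x - ∑ y, softmax (fhat x) τ' y * r x y
        = ∑ y, softmax (fhat x) τ' y * (maxv x - r x y) := by
      simp only [mul_sub]
      rw [Finset.sum_sub_distrib, ← Finset.sum_mul, hsum1, one_mul]
    rw [heq]
    have hbound : ∀ y : Y, softmax (fhat x) τ' y * (maxv x - r x y)
        ≤ (maxv x - minv x) * Real.exp (-(δ/τ')) := by
      intro y
      by_cases hy : y ∈ maxSet (fun y' => r x y')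
      · rw [hMval x y hy]
        simp only [sub_self, mul_zero]
        exact mul_nonneg (by linarith [hminmax x]) (Real.exp_pos _).le
      · have hs : softmax (fhat x) τ' y ≤ Real.exp (-(δ/τ')) := by
          have h1 := softmax_le (fhat x) τ' y ymax
          have h2 : fhat x y / τ' - fhat x ymax / τ' ≤ -(δ/τ') := by
            rw [div_sub_div_same]
            have h3 : fhat x y - fhat x ymax
                = -((1:ℝ)/((k:ℝ)*((maxSet (fun y' => r x y')).card:ℝ))) := by
              rw [hfhat' x y, hfhat' x ymax]
              simp [hy, hymax]
            rw [h3, neg_div]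
            have h4 : δ ≤ (1:ℝ)/((k:ℝ)*((maxSet (fun y' => r x y')).card:ℝ)) := by
              rw [hδdef]
              gcongr
              exact_mod_cast hMcardle x
            have h5 : δ/τ' ≤ ((1:ℝ)/((k:ℝ)*((maxSet (fun y' => r x y')).card:ℝ)))/τ' := by
              gcongr
            linarith
          exact h1.trans (Real.exp_le_exp.2 h2)
        calc softmax (fhat x) τ' y * (maxv x - r x y)
            ≤ Real.exp (-(δ/τ')) * (maxv x - minv x) :=
              mul_le_mul hs (by linarith [hrge x y]) (by linarith [hrle x y]) (Real.exp_pos _).le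
          _ = (maxv x - minv x) * Real.exp (-(δ/τ')) := mul_comm _ _
    calc ∑ y, softmax (fhat x) τ' y * (maxv x - r x y)
        ≤ ∑ _y : Y, (maxv x - minv x) * Real.exp (-(δ/τ')) :=
          Finset.sum_le_sum (fun y _ => hbound y)
      _ = (Fintype.card Y:ℝ) * ((maxv x - minv x) * Real.exp (-(δ/τ'))) := by
          rw [Finset.sum_const, Finset.card_univ, nsmul_eq_mul]
  set C : ℝ := univ.sup' hXne (fun x => maxv x - minv x) with hCdef
  have hCle : ∀ x, maxv x - minv x ≤ C := by
    intro x
    rw [hCdef]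
    exact le_sup' (fun x => maxv x - minv x) (mem_univ x)
  have hCpos : 0 < C :=
    lt_of_lt_of_le (by linarith [hminmax (Classical.arbitrary X)]) (hCle (Classical.arbitrary X))
  set A : ℝ := (Fintype.card Y:ℝ) * C with hAdef
  have hApos : 0 < A := mul_pos hYpos hCpos
  have hsoftR : ∀ τ', 0 < τ' →
      (∑ x, ptest x * maxv x) - reward ptest r (fun x => softmax (fhat x) τ')
        ≤ A * Real.exp (-(δ/τ')) := by
    intro τ' hτ'
    unfold reward
    rw [← Finset.sum_sub_distrib]
    calc ∑ x, (ptest x * maxv x - ptest x * ∑ y, softmax (fhat x) τ' y * r x y)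
        = ∑ x, ptest x * (maxv x - ∑ y, softmax (fhat x) τ' y * r x y) := by
          exact Finset.sum_congr rfl fun x _ => (mul_sub _ _ _).symm
      _ ≤ ∑ x, ptest x * (A * Real.exp (-(δ/τ'))) := by
          apply Finset.sum_le_sum
          intro x _
          apply mul_le_mul_of_nonneg_left _ (hp0 x)
          refine (hsoft τ' hτ' x).trans ?_
          rw [hAdef, mul_assoc]
          exact mul_le_mul_of_nonneg_left
            (mul_le_mul_of_nonneg_right (hCle x) (Real.exp_pos _).le) hYpos.le
      _ = A * Real.exp (-(δ/τ')) := by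
          rw [← Finset.sum_mul, hp1, one_mul]
  -- comparing max of experts
  have hS : Finset.univ.sup' ⟨⟨0, by omega⟩, Finset.mem_univ _⟩
      (fun i => reward ptest r (f i)) < ∑ x, ptest x * maxv x :=
    (Finset.sup'_lt_iff _).2 fun i _ => hRstar i
  set g : ℝ := (∑ x, ptest x * maxv x) - Finset.univ.sup' ⟨⟨0, by omega⟩, Finset.mem_univ _⟩
      (fun i => reward ptest r (f i)) with hgdef
  have hgpos : 0 < g := sub_pos.2 hS
  refine ⟨min (1/2) (g*δ/(2*A)), ⟨lt_min (by norm_num)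
    (div_pos (mul_pos hgpos hδpos) (by linarith)), lt_of_le_of_lt (min_le_left _ _) (by norm_num)⟩, ?_⟩
  intro τ' hτ'0 hτ'le
  have hτ'2 : τ' ≤ g*δ/(2*A) := le_trans hτ'le (min_le_right _ _)
  have h1 : Real.exp (-(δ/τ')) ≤ τ'/δ := by
    rw [Real.exp_neg]
    have h2 : δ/τ' ≤ Real.exp (δ/τ') := by linarith [Real.add_one_le_exp (δ/τ')]
    have h3 : 0 < δ/τ' := div_pos hδpos hτ'0
    rw [show τ'/δ = (δ/τ')⁻¹ by rw [inv_div]]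
    exact inv_anti₀ h3 h2
  have h4 : A * Real.exp (-(δ/τ')) ≤ g/2 := by
    have h5 : A * Real.exp (-(δ/τ')) ≤ A * (τ'/δ) := mul_le_mul_of_nonneg_left h1 hApos.le
    have h6 : A * (τ'/δ) ≤ A * ((g*δ/(2*A))/δ) := by gcongr
    have h7 : A * ((g*δ/(2*A))/δ) = g/2 := by
      field_simp
    linarith
  have h8 := hsoftR τ' hτ'0
  rw [gt_iff_lt]
  linarith
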